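/- Let h : ℤ → ℤ≥0 with h(j) = 0 for j ≪ 0, and let d = qdepth(h), i.e. the maximal d such that β_k^d(h) ≥ 0 for all k ≤ d. Then for all integers k ≤ d' ≤ d one has β_k^{d'}(h) ≥ β_k^d(h) ≥ 0. -/
import Mathlib


/-- `β_k^d(h) = Σ_{j ≤ k} (-1)^{k-j} C(d-j, k-j) h(j)` (a finite sum when `h`
vanishes for `j ≪ 0`). -/
noncomputable def beta (h : ℤ → ℤ) (d k : ℤ) : ℤ :=
  ∑ᶠ j ∈ Set.Iic k, (-1 : ℤ) ^ (k - j).toNat * ((d - j).toNat.choose (k - j).toNat : ℤ) * h j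

/-- The set of `d` such that `β_k^d(h) ≥ 0` for all `k ≤ d`; its maximum is `qdepth h`. -/
def qdepthSet (h : ℤ → ℤ) : Set ℤ := {d : ℤ | ∀ k ≤ d, 0 ≤ beta h d k}

lemma beta_eq_sum (h : ℤ → ℤ) {N : ℤ} (hvan : ∀ j < N, h j = 0) (d k : ℤ) :
    beta h d k = ∑ j ∈ Finset.Icc N k,
      (-1 : ℤ) ^ (k - j).toNat * ((d - j).toNat.choose (k - j).toNat : ℤ) * h j := by
  refine finsum_mem_eq_sum_of_inter_support_eq _ ?_
  ext j
  simp only [Set.mem_inter_iff, Set.mem_Iic, Function.mem_support, Finset.coe_Icc,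
    Set.mem_Icc, ne_eq]
  constructor
  · rintro ⟨hj, hne⟩
    refine ⟨⟨?_, hj⟩, hne⟩
    by_contra hN
    exact hne (by simp [hvan j (by omega)])
  · rintro ⟨⟨_, hj⟩, hne⟩
    exact ⟨hj, hne⟩

/-- Pascal recursion: `β_k^e - β_k^{e+1} = β_{k-1}^e` for `k ≤ e`. -/
lemma beta_pascal (h : ℤ → ℤ) {N : ℤ} (hvan : ∀ j < N, h j = 0) {e k : ℤ} (hk : k ≤ e) :
    beta h e k = beta h (e + 1) k + beta h e (k - 1) := by
  rw [beta_eq_sum h hvan, beta_eq_sum h hvan, beta_eq_sum h hvan]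
  rcases le_or_gt N k with hN | hN
  · have hins : Finset.Icc N k = insert k (Finset.Icc N (k - 1)) := by
      ext j; simp only [Finset.mem_insert, Finset.mem_Icc]; omega
    have hnotmem : k ∉ Finset.Icc N (k - 1) := by simp
    rw [hins, Finset.sum_insert hnotmem, Finset.sum_insert hnotmem]
    simp only [sub_self, Int.toNat_zero, pow_zero, Nat.choose_zero_right, Nat.cast_one,
      one_mul, mul_one]
    rw [add_assoc]
    congr 1
    rw [← Finset.sum_add_distrib]
    refine Finset.sum_congr rfl ?_
    intro j hj
    simp only [Finset.mem_Icc] at hj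
    have h1 : (k - j).toNat = (k - 1 - j).toNat + 1 := by omega
    have h2 : (e + 1 - j).toNat = (e - j).toNat + 1 := by omega
    rw [h1, h2, Nat.choose_succ_succ]
    push_cast
    ring
  · have : Finset.Icc N k = ∅ := by
      ext j; simp only [Finset.mem_Icc, Finset.notMem_empty, iff_false]; omega
    have h2 : Finset.Icc N (k - 1) = ∅ := by
      ext j; simp only [Finset.mem_Icc, Finset.notMem_empty, iff_false]; omega
    simp [this, h2]

lemma beta_vanish (h : ℤ → ℤ) {N : ℤ} (hvan : ∀ j < N, h j = 0) {d k : ℤ} (hk : k < N) :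
    beta h d k = 0 := by
  rw [beta_eq_sum h hvan]
  have : Finset.Icc N k = ∅ := by
    ext j; simp only [Finset.mem_Icc, Finset.notMem_empty, iff_false]; omega
  simp [this]

lemma mem_of_succ_mem (h : ℤ → ℤ) {N : ℤ} (hvan : ∀ j < N, h j = 0) {d' : ℤ}
    (hd : (d' + 1) ∈ qdepthSet h) : d' ∈ qdepthSet h := by
  have key : ∀ n : ℕ, ∀ k : ℤ, k ≤ d' → k ≤ N - 1 + n → 0 ≤ beta h d' k := by
    intro n
    induction n with
    | zero => intro k _ hk; rw [beta_vanish h hvan (by omega)]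
    | succ n ih =>
      intro k hk1 hk2
      rcases le_or_gt k (N - 1 + n) with hle | hgt
      · exact ih k hk1 hle
      · rw [beta_pascal h hvan hk1]
        have h1 : 0 ≤ beta h (d' + 1) k := hd k (by omega)
        have h2 : 0 ≤ beta h d' (k - 1) := ih (k - 1) (by omega) (by omega)
        omega
  intro k hk
  exact key (k - (N - 1)).toNat k hk (by omega)

lemma mem_of_le (h : ℤ → ℤ) {N : ℤ} (hvan : ∀ j < N, h j = 0) {d : ℤ}
    (hd : d ∈ qdepthSet h) : ∀ d' ≤ d, d' ∈ qdepthSet h := by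
  have key : ∀ n : ℕ, ∀ d' : ℤ, d' ≤ d → d - d' ≤ n → d' ∈ qdepthSet h := by
    intro n
    induction n with
    | zero => intro d' h1 h2; have : d' = d := by omega
              subst this; exact hd
    | succ n ih =>
      intro d' h1 h2
      rcases le_or_gt (d - d') n with hle | hgt
      · exact ih d' h1 hle
      · exact mem_of_succ_mem h hvan (ih (d' + 1) (by omega) (by omega))
  intro d' hd'
  exact key (d - d').toNat d' hd' (by omega)

theorem beta_monotone (h : ℤ → ℤ) (hne : h ≠ 0) (hnn : ∀ j, 0 ≤ h j)
    (hvan : ∃ N : ℤ, ∀ j < N, h j = 0)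
    (d : ℤ) (hd : IsGreatest (qdepthSet h) d) :
    ∀ k d' : ℤ, k ≤ d' → d' ≤ d → 0 ≤ beta h d k ∧ beta h d k ≤ beta h d' k := by
  obtain ⟨N, hvan⟩ := hvan
  have hmem : ∀ d' ≤ d, d' ∈ qdepthSet h := mem_of_le h hvan hd.1
  intro k d' hkd' hd'd
  constructor
  · exact hd.1 k (le_trans hkd' hd'd)
  · -- monotone chain
    have key : ∀ n : ℕ, ∀ e : ℤ, k ≤ e → e ≤ d → d - e ≤ n → beta h d k ≤ beta h e k := by
      intro n
      induction n with
      | zero => intro e h1 h2 h3; have : e = d := by omega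
                subst this; exact le_refl _
      | succ n ih =>
        intro e h1 h2 h3
        rcases le_or_gt (d - e) n with hle | hgt
        · exact ih e h1 h2 hle
        · have step : beta h e k = beta h (e + 1) k + beta h e (k - 1) :=
            beta_pascal h hvan h1
          have h4 : 0 ≤ beta h e (k - 1) := hmem e h2 (k - 1) (by omega)
          have h5 : beta h d k ≤ beta h (e + 1) k := ih (e + 1) (by omega) (by omega) (by omega)
          omega
    exact key (d - d').toNat d' hkd' hd'd (by omega)
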